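/- Let μ be a compactly supported Borel probability measure on ℝⁿ (with the Euclidean norm ‖·‖) whose support is not contained in any affine line. Then the median functional F_μ(x) = ∫ ‖x−z‖ dμ(z) attains its global infimum over ℝⁿ at exactly one point (the unique median of μ). -/

import Mathlib

open MeasureTheory

private lemma euclidean_median_aux {E : Type} [NormedAddCommGroup E] [NormedSpace ℝ E]
    (y m : E) (r q : ℝ) (hqr : q - r ≠ 0) :
    (q - r)⁻¹ • (q • m - r • y) = y + (q / (q - r)) • (m - y) := by
  match_scalars
  · field_simp
  · field_simp
    ring

/-- Existence and uniqueness of the Euclidean median: if `μ` is a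
compactly supported Borel probability measure on `ℝⁿ` whose support is not contained in
any affine line, then `F_μ(x) = ∫ ‖x - z‖ dμ(z)` attains its global infimum over `ℝⁿ`
at exactly one point. -/
theorem euclidean_median_exists_unique
    {n : ℕ} (μ : Measure (EuclideanSpace ℝ (Fin n))) [IsProbabilityMeasure μ]
    (hcpt : ∃ s : Set (EuclideanSpace ℝ (Fin n)), IsCompact s ∧ μ sᶜ = 0)
    (hnotline : ¬ ∃ a b : EuclideanSpace ℝ (Fin n),
      μ {z | ∃ t : ℝ, z = a + t • b}ᶜ = 0) :
    ∃! m : EuclideanSpace ℝ (Fin n),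
      ∀ x : EuclideanSpace ℝ (Fin n), (∫ z, ‖m - z‖ ∂μ) ≤ ∫ z, ‖x - z‖ ∂μ := by
  classical
  set E := EuclideanSpace ℝ (Fin n)
  obtain ⟨s, hs, hμs⟩ := hcpt
  obtain ⟨C, hC⟩ : ∃ C, ∀ z ∈ s, ‖z‖ ≤ C := hs.isBounded.exists_norm_le
  have haes : ∀ᵐ z ∂μ, z ∈ s := by
    rw [ae_iff]
    simpa [Set.compl_def] using hμs
  set F : E → ℝ := fun x => ∫ z, ‖x - z‖ ∂μ with hF
  -- integrability
  have hint : ∀ x : E, Integrable (fun z => ‖x - z‖) μ := by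
    intro x
    refine Integrable.mono' (integrable_const (‖x‖ + C)) ?_ ?_
    · exact (continuous_const.sub continuous_id).norm.aestronglyMeasurable
    · filter_upwards [haes] with z hz
      have h1 : ‖z‖ ≤ C := hC z hz
      have h2 : ‖x - z‖ ≤ ‖x‖ + ‖z‖ := norm_sub_le x z
      simpa [Real.norm_eq_abs, abs_of_nonneg (norm_nonneg (x - z))] using
        h2.trans (by linarith)
  have hintz : Integrable (fun z : E => ‖z‖) μ := by
    simpa [zero_sub, norm_neg] using hint 0
  set I : ℝ := ∫ z, ‖z‖ ∂μ with hI
  -- Lipschitz continuity of F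
  have hlip : LipschitzWith 1 F := by
    refine LipschitzWith.of_dist_le_mul fun x y => ?_
    rw [Real.dist_eq, NNReal.coe_one, one_mul, dist_eq_norm]
    have hsub : F x - F y = ∫ z, (‖x - z‖ - ‖y - z‖) ∂μ :=
      (integral_sub (hint x) (hint y)).symm
    rw [hsub]
    calc |∫ z, (‖x - z‖ - ‖y - z‖) ∂μ| ≤ ∫ z, |‖x - z‖ - ‖y - z‖| ∂μ := by
          simpa [Real.norm_eq_abs] using
            norm_integral_le_integral_norm (fun z => ‖x - z‖ - ‖y - z‖) (μ := μ)
      _ ≤ ∫ _z, ‖x - y‖ ∂μ := by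
          refine integral_mono ((hint x).sub (hint y)).abs (integrable_const _) fun z => ?_
          have := abs_norm_sub_norm_le (x - z) (y - z)
          simpa [sub_sub_sub_cancel_right] using this
      _ = ‖x - y‖ := by simp
  -- coercivity
  have hcoer : ∀ x : E, ‖x‖ - I ≤ F x := by
    intro x
    have h1 : ∫ z, (‖x‖ - ‖z‖) ∂μ ≤ F x :=
      integral_mono ((integrable_const _).sub hintz) (hint x) fun z => norm_sub_norm_le x z
    rwa [integral_sub (integrable_const _) hintz, integral_const, probReal_univ,
      one_smul] at h1
  have hF0 : 0 ≤ F 0 := integral_nonneg fun z => norm_nonneg _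
  have hI0 : 0 ≤ I := integral_nonneg fun z => norm_nonneg _
  set R : ℝ := F 0 + I + 1 with hR
  have h0mem : (0 : E) ∈ Metric.closedBall (0 : E) R := by
    simp only [Metric.mem_closedBall, dist_self]
    linarith
  obtain ⟨m, hmB, hm⟩ := (isCompact_closedBall (0 : E) R).exists_isMinOn ⟨0, h0mem⟩
    hlip.continuous.continuousOn
  have hmin : ∀ x : E, F m ≤ F x := by
    intro x
    by_cases hx : x ∈ Metric.closedBall (0 : E) R
    · exact hm hx
    · have hxR : R < ‖x‖ := by
        simpa [Metric.mem_closedBall, dist_zero_right] using hx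
      have : F 0 < F x := by
        have := hcoer x
        linarith
      exact (hm h0mem).trans this.le
  refine ⟨m, hmin, fun y hy => ?_⟩
  by_contra hne
  -- y is also a minimizer, y ≠ m
  have hFeq : F y = F m := le_antisymm (hy m) (hmin y)
  set c : E := (2 : ℝ)⁻¹ • (y + m) with hc
  have hkey : ∀ z : E, (y - z) + (m - z) = (2 : ℝ) • (c - z) := by
    intro z
    rw [hc]
    module
  have hnorm2 : ∀ z : E, ‖(y - z) + (m - z)‖ = 2 * ‖c - z‖ := by
    intro z
    rw [hkey z, norm_smul]
    norm_num
  set g : E → ℝ := fun z => ‖y - z‖ + ‖m - z‖ - ‖(y - z) + (m - z)‖ with hg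
  have hgnonneg : 0 ≤ g := fun z => by
    have := norm_add_le (y - z) (m - z)
    simp only [hg, Pi.zero_apply]
    linarith
  have hintc : Integrable (fun z => ‖(y - z) + (m - z)‖) μ := by
    have : (fun z : E => ‖(y - z) + (m - z)‖) = fun z => 2 * ‖c - z‖ :=
      funext fun z => hnorm2 z
    rw [this]
    exact (hint c).const_mul 2
  have hgint : Integrable g μ := ((hint y).add (hint m)).sub hintc
  have hadd : Integrable (fun z : E => ‖y - z‖ + ‖m - z‖) μ := (hint y).add (hint m)
  have hintg_eq : ∫ z, g z ∂μ = F y + F m - 2 * F c := by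
    have e0 : ∫ z, g z ∂μ =
        (∫ z, (‖y - z‖ + ‖m - z‖) ∂μ) - ∫ z, ‖(y - z) + (m - z)‖ ∂μ :=
      integral_sub hadd hintc
    have e1 : ∫ z, (‖y - z‖ + ‖m - z‖) ∂μ = F y + F m := integral_add (hint y) (hint m)
    have e2 : ∫ z, ‖(y - z) + (m - z)‖ ∂μ = 2 * F c := by
      have h1 : (fun z : E => ‖(y - z) + (m - z)‖) = fun z => 2 * ‖c - z‖ :=
        funext fun z => hnorm2 z
      rw [h1, integral_const_mul]
    rw [e0, e1, e2]
  have hintg_le : ∫ z, g z ∂μ ≤ 0 := by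
    have := hmin c
    rw [hintg_eq]
    linarith [hFeq]
  have hintg0 : ∫ z, g z ∂μ = 0 :=
    le_antisymm hintg_le (integral_nonneg hgnonneg)
  have hg0 : ∀ᵐ z ∂μ, g z = 0 := by
    have := (integral_eq_zero_iff_of_nonneg hgnonneg hgint).mp hintg0
    filter_upwards [this] with z hz
    simpa using hz
  have hline : ∀ᵐ z ∂μ, ∃ t : ℝ, z = y + t • (m - y) := by
    filter_upwards [hg0] with z hz
    have hray : SameRay ℝ (y - z) (m - z) := by
      rw [sameRay_iff_norm_add]
      change ‖y - z‖ + ‖m - z‖ - ‖y - z + (m - z)‖ = 0 at hz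
      linarith
    rcases hray with h | h | ⟨r, q, hr, hq, hrq⟩
    · exact ⟨0, by rw [sub_eq_zero] at h; simp [h]⟩
    · exact ⟨1, by rw [sub_eq_zero] at h; simp [h]⟩
    · have hrnq : r ≠ q := by
        intro h
        apply hne
        subst h
        have h4 : y - z = m - z := smul_right_injective _ (ne_of_gt hr) hrq
        exact sub_left_inj.mp h4
      have hqr : q - r ≠ 0 := sub_ne_zero.mpr (Ne.symm hrnq)
      refine ⟨q / (q - r), ?_⟩
      -- from r • (y - z) = q • (m - z) get (q - r) • z = q • m - r • y
      have h1 : (q - r) • z = q • m - r • y := by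
        linear_combination (norm := module) hrq
      have h3 : z = (q - r)⁻¹ • (q • m - r • y) := by
        rw [← h1, inv_smul_smul₀ hqr]
      rw [h3]
      exact euclidean_median_aux y m r q hqr
  refine hnotline ⟨y, m - y, ?_⟩
  have h5 : μ {z : E | ¬ ∃ t : ℝ, z = y + t • (m - y)} = 0 := ae_iff.mp hline
  simpa [Set.compl_setOf] using h5
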